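/- Let K be a UFD of characteristic p > 0, let A = K[x_1,…,x_n] be the polynomial algebra, B = K[x_1^p,…,x_n^p], let f_1,…,f_m ∈ A, let Q be a prime ideal of A, and fix i ∈ {1,…,m}; set R_i = B[f_1,…,f_{i-1},f_{i+1},…,f_m]. Suppose there exist s_1,…,s_m ∈ A with s_i ∉ Q such that s_1·d(f_1) + … + s_m·d(f_m) ∈ Q for every K-derivation d of A. Then the image of f_i in A/Q is p-dependent over the image of R_i in A/Q, i.e., the coset f_i + Q lies in the fraction field (inside Frac(A/Q)) of the canonical image of R_i in A/Q. -/

import Mathlib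

open MvPolynomial

/-- The monomial `f₁^{α₁} ⋯ f_m^{α_m}` for a multi-index `α ∈ Ω_m` (all exponents `< p`). -/
def pMonomial {S : Type*} [CommRing S] {m p : ℕ} (f : Fin m → S) (α : Fin m → Fin p) : S :=
  ∏ i, f i ^ (α i : ℕ)

/-- `f₁, …, f_m` are `p`-independent over the subring `B`. -/
def pIndependent {S : Type*} [CommRing S] (B : Subring S) {m : ℕ} (p : ℕ) (f : Fin m → S) : Prop :=
  ∀ b : (Fin m → Fin p) → S, (∀ α, b α ∈ B) →
    ∑ α : Fin m → Fin p, b α * pMonomial f α = 0 → ∀ α, b α = 0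

/-- `f₁, …, f_m` form a `p`-basis of `R` over `B`. -/
def IsPBasis {S : Type*} [CommRing S] (B : Subring S) (R : Set S) {m : ℕ} (p : ℕ)
    (f : Fin m → S) : Prop :=
  (↑B ⊆ R) ∧ (∀ α : Fin m → Fin p, pMonomial f α ∈ R) ∧ pIndependent B p f ∧
    ∀ r ∈ R, ∃ b : (Fin m → Fin p) → S, (∀ α, b α ∈ B) ∧
      r = ∑ α : Fin m → Fin p, b α * pMonomial f α

/-- The jacobian determinant of `f₁,…,f_m` w.r.t. the variables `x_{j₁},…,x_{j_m}`. -/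
noncomputable def jacMinor {K : Type*} [CommRing K] {n m : ℕ} (f : Fin m → MvPolynomial (Fin n) K)
    (j : Fin m → Fin n) : MvPolynomial (Fin n) K :=
  (Matrix.of fun i l => pderiv (j l) (f i)).det

/-- The subring `B = K[x₁^p, …, x_n^p]` of `K[x₁,…,x_n]`. -/
noncomputable def pPowers (K : Type*) [CommRing K] (n p : ℕ) : Subring (MvPolynomial (Fin n) K) :=
  (Algebra.adjoin K (Set.range fun i : Fin n => (X i : MvPolynomial (Fin n) K) ^ p)).toSubring

/-- `R_i = B[f₁,…,f̂ᵢ,…,f_m]`. -/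
noncomputable def Ri (K : Type*) [CommRing K] {n m : ℕ} (p : ℕ) (f : Fin m → MvPolynomial (Fin n) K)
    (i : Fin m) : Subring (MvPolynomial (Fin n) K) :=
  Subring.closure (↑(pPowers K n p) ∪ (f '' {j | j ≠ i}))

/-- `R_{ij} = B[f₁,…,f̂ᵢ,…,f̂ⱼ,…,f_m]`. -/
noncomputable def Rij (K : Type*) [CommRing K] {n m : ℕ} (p : ℕ) (f : Fin m → MvPolynomial (Fin n) K)
    (i j : Fin m) : Subring (MvPolynomial (Fin n) K) :=
  Subring.closure (↑(pPowers K n p) ∪ (f '' {l | l ≠ i ∧ l ≠ j}))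

/-- An element is `B`-free if it has no noninvertible factor from `B`. -/
def BFree {S : Type*} [CommRing S] (B : Subring S) (a : S) : Prop :=
  ∀ b ∈ B, b ∣ a → IsUnit b

/-- `C_B(f₁,…,f_m) = B₀(f₁,…,f_m) ∩ A`: those elements of `A` lying in the field of
fractions of `B[f₁,…,f_m]`. -/
def CB {S : Type*} [CommRing S] (B : Subring S) {m : ℕ} (f : Fin m → S) : Set S :=
  {a | ∃ s t : S, s ∈ Subring.closure (↑B ∪ Set.range f) ∧
      t ∈ Subring.closure (↑B ∪ Set.range f) ∧ s ≠ 0 ∧ a * s = t}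

/-- A `B`-derivation of `A`: additive, Leibniz rule, vanishing on `B`. -/
def IsBDerivation {S : Type*} [CommRing S] (B : Subring S) (d : S → S) : Prop :=
  (∀ x y, d (x + y) = d x + d y) ∧ (∀ x y, d (x * y) = x * d y + y * d x) ∧ ∀ b ∈ B, d b = 0

section Aux

/-- The subfield of fractions of a subring of a field. -/
def fracSubfield {F : Type*} [Field F] (T : Subring F) : Subfield F where
  carrier := {x | ∃ a ∈ T, ∃ b ∈ T, b ≠ 0 ∧ x * b = a}
  zero_mem' := ⟨0, zero_mem T, 1, one_mem T, one_ne_zero, by ring⟩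
  one_mem' := ⟨1, one_mem T, 1, one_mem T, one_ne_zero, by ring⟩
  add_mem' := by
    rintro x y ⟨a, ha, b, hb, hb0, hx⟩ ⟨c, hc, d, hd, hd0, hy⟩
    exact ⟨a * d + c * b, add_mem (mul_mem ha hd) (mul_mem hc hb), b * d,
      mul_mem hb hd, mul_ne_zero hb0 hd0, by
        have : (x + y) * (b * d) = (x * b) * d + (y * d) * b := by ring
        rw [this, hx, hy]⟩
  neg_mem' := by
    rintro x ⟨a, ha, b, hb, hb0, hx⟩
    exact ⟨-a, neg_mem ha, b, hb, hb0, by rw [neg_mul, hx]⟩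
  mul_mem' := by
    rintro x y ⟨a, ha, b, hb, hb0, hx⟩ ⟨c, hc, d, hd, hd0, hy⟩
    exact ⟨a * c, mul_mem ha hc, b * d, mul_mem hb hd, mul_ne_zero hb0 hd0, by
      have : (x * y) * (b * d) = (x * b) * (y * d) := by ring
      rw [this, hx, hy]⟩
  inv_mem' := by
    rintro x ⟨a, ha, b, hb, hb0, hx⟩
    by_cases hx0 : x = 0
    · exact ⟨0, zero_mem T, 1, one_mem T, one_ne_zero, by rw [hx0]; simp⟩
    · refine ⟨b, hb, a, ha, ?_, ?_⟩
      · rw [← hx]; exact mul_ne_zero hx0 hb0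
      · rw [← hx]; field_simp
  
theorem mem_fracSubfield_of_mem {F : Type*} [Field F] (T : Subring F) {a : F} (ha : a ∈ T) :
    a ∈ fracSubfield T :=
  ⟨a, ha, 1, one_mem T, one_ne_zero, mul_one a⟩

end Aux

section KeyLemma

open Polynomial IntermediateField

set_option maxHeartbeats 1000000
set_option synthInstance.maxHeartbeats 400000

theorem exists_bderivation {L : Type*} [Field L] {p : ℕ} (hp : p.Prime) [CharP L p]
    (E : Subfield L) (hE : ∀ x : L, x ^ p ∈ E) {u : L} (hu : u ∉ E) :
    ∃ D : L → L, (∀ x y, D (x + y) = D x + D y) ∧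
      (∀ x y, D (x * y) = x * D y + y * D x) ∧ (∀ x ∈ E, D x = 0) ∧ D u ≠ 0 := by
  haveI := Fact.mk hp
  -- Zorn: a maximal subfield M ⊇ E with u ∉ M
  obtain ⟨M, hEM, hMs, hMmax⟩ : ∃ M : Subfield L, E ≤ M ∧ u ∉ M ∧
      ∀ N : Subfield L, u ∉ N → M ≤ N → N = M := by
    obtain ⟨M, hEM, hM⟩ := zorn_le_nonempty₀ {N : Subfield L | u ∉ N}
      (fun c hcs hchain y hy => ⟨sSup c, by
        simp only [Set.mem_setOf_eq, Subfield.mem_sSup_of_directedOn ⟨y, hy⟩ hchain.directedOn]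
        rintro ⟨N, hN, huN⟩; exact hcs hN huN, fun z hz => le_sSup hz⟩) E hu
    exact ⟨M, hEM, hM.prop, fun N hN hMN => le_antisymm (hM.2 hN hMN) hMN⟩
  haveI : CharP M p := ((algebraMap M L).charP_iff Subtype.val_injective p).mpr inferInstance
  -- every element of L is integral over M, with minimal polynomial X^p - C (x^p)
  have hint : ∀ x : L, IsIntegral M x := fun x => by
    refine ⟨Polynomial.X ^ p - Polynomial.C ⟨x ^ p, hEM (hE x)⟩, monic_X_pow_sub_C _ hp.ne_zero, ?_⟩
    have : (algebraMap M L) ⟨x ^ p, hEM (hE x)⟩ = x ^ p := rfl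
    simp [this]
  have hminpoly : ∀ x : L, x ∉ M →
      minpoly M x = Polynomial.X ^ p - Polynomial.C ⟨x ^ p, hEM (hE x)⟩ := by
    intro x hx
    refine (minpoly.eq_of_irreducible_of_monic ?_ ?_ (monic_X_pow_sub_C _ hp.ne_zero)).symm
    · refine X_pow_sub_C_irreducible_of_prime hp ?_
      rintro b hb
      apply hx
      have hbx : ((b : L) - x) ^ p = 0 := by
        rw [sub_pow_char (R := L)]
        have : (b : L) ^ p = x ^ p := congrArg Subtype.val hb
        rw [this, sub_self]
      have : (b : L) = x := sub_eq_zero.mp (pow_eq_zero_iff hp.ne_zero |>.mp hbx)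
      exact this ▸ b.2
    · have : (algebraMap M L) ⟨x ^ p, hEM (hE x)⟩ = x ^ p := rfl
      simp [this]
  have hfinrank : ∀ x : L, x ∉ M →
      Module.finrank M (IntermediateField.adjoin M ({x} : Set L)) = p := by
    intro x hx
    rw [IntermediateField.adjoin.finrank (hint x), hminpoly x hx, natDegree_X_pow_sub_C]
  -- M⟮u⟯ = ⊤
  have htop : IntermediateField.adjoin M ({u} : Set L) = ⊤ := by
    rw [eq_top_iff]
    intro x _
    by_cases hx : x ∈ M
    · exact (IntermediateField.adjoin M ({u} : Set L)).algebraMap_mem ⟨x, hx⟩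
    · -- u ∈ M⟮x⟯
      have hux : u ∈ IntermediateField.adjoin M ({x} : Set L) := by
        by_contra huM
        have hNM := hMmax (IntermediateField.adjoin M ({x} : Set L)).toSubfield
          (fun h => huM ((mem_toSubfield _ _).mp h))
          (fun y hy => (mem_toSubfield _ _).mpr
            ((IntermediateField.adjoin M ({x} : Set L)).algebraMap_mem ⟨y, hy⟩))
        have hxN : x ∈ (IntermediateField.adjoin M ({x} : Set L)).toSubfield :=
          (mem_toSubfield _ _).mpr (IntermediateField.mem_adjoin_simple_self M x)
        rw [hNM] at hxN
        exact hx hxN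
      haveI : FiniteDimensional M (IntermediateField.adjoin M ({x} : Set L)) :=
        IntermediateField.adjoin.finiteDimensional (hint x)
      have hle : IntermediateField.adjoin M ({u} : Set L) ≤
          IntermediateField.adjoin M ({x} : Set L) := by
        rw [IntermediateField.adjoin_simple_le_iff]; exact hux
      have heq := IntermediateField.eq_of_le_of_finrank_eq hle
        (by rw [hfinrank u hMs, hfinrank x hx])
      rw [heq]
      exact IntermediateField.mem_adjoin_simple_self M x
  -- surjectivity of Polynomial.aeval u
  have hsurj : ∀ x : L, ∃ q : Polynomial M, Polynomial.aeval u q = x := by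
    intro x
    have hx : x ∈ IntermediateField.adjoin M ({u} : Set L) := htop ▸ trivial
    have : x ∈ (Polynomial.aeval u : Polynomial M →ₐ[M] L).range := by
      rw [← Algebra.adjoin_singleton_eq_range_aeval, ←
        IntermediateField.adjoin_simple_toSubalgebra_of_isAlgebraic (hint u).isAlgebraic]
      exact hx
    exact this
  classical
  have hgder : derivative (minpoly M u) = 0 := by
    rw [hminpoly u hMs]
    simp only [derivative_sub, derivative_C, derivative_X_pow, sub_zero]
    have : ((p : ℕ) : M) = 0 := CharP.cast_eq_zero M p
    rw [this]
    simp
  have hwd : ∀ q r : Polynomial M, Polynomial.aeval u q = Polynomial.aeval u r →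
      Polynomial.aeval u (derivative q) = Polynomial.aeval u (derivative r) := by
    intro q r h
    obtain ⟨s, hs⟩ : minpoly M u ∣ (q - r) := minpoly.dvd M u (by simp [h])
    have hq : q = r + minpoly M u * s := by rw [← hs]; ring
    rw [hq]
    simp only [derivative_add, derivative_mul, map_add, map_mul, hgder,
      minpoly.aeval, map_zero, zero_mul, mul_zero, add_zero]
  set D : L → L := fun x => Polynomial.aeval u (derivative (Classical.choose (hsurj x))) with hDdef
  have hD : ∀ q : Polynomial M, D (Polynomial.aeval u q) = Polynomial.aeval u (derivative q) := fun q =>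
    hwd _ q (Classical.choose_spec (hsurj (Polynomial.aeval u q)))
  refine ⟨D, ?_, ?_, ?_, ?_⟩
  · intro x y
    obtain ⟨qx, rfl⟩ := hsurj x
    obtain ⟨qy, rfl⟩ := hsurj y
    rw [← map_add, hD, hD, hD, derivative_add, map_add]
  · intro x y
    obtain ⟨qx, rfl⟩ := hsurj x
    obtain ⟨qy, rfl⟩ := hsurj y
    rw [← map_mul, hD, hD, hD, derivative_mul, map_add, map_mul, map_mul]
    ring
  · intro x hx
    have hxM : x ∈ M := hEM hx
    have : Polynomial.aeval u (Polynomial.C (⟨x, hxM⟩ : M)) = x := by rw [Polynomial.aeval_C]; rfl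
    rw [← this, hD]
    simp
  · have : D u = 1 := by
      have h1 : Polynomial.aeval u (Polynomial.X : Polynomial M) = u := by simp
      rw [← h1, hD]
      simp
    rw [this]
    exact one_ne_zero

end KeyLemma

set_option maxHeartbeats 2000000
set_option synthInstance.maxHeartbeats 400000

/-- **Proposition 1 b).** If condition `(∗)` holds for the index `i`, then the coset of `fᵢ`
in `A/Q` is `p`-dependent over the image of `Rᵢ = B[f₁,…,f̂ᵢ,…,f_m]` in `A/Q`, i.e. it lies
in the field of fractions of that image inside `Frac(A/Q)`. -/
theorem pDependent_of_star
    {K : Type*} [CommRing K] [IsDomain K] [UniqueFactorizationMonoid K]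
    (p : ℕ) (hp : 0 < p) [CharP K p] {n m : ℕ}
    (f : Fin m → MvPolynomial (Fin n) K)
    (Q : Ideal (MvPolynomial (Fin n) K)) (hQ : Q.IsPrime) (i : Fin m)
    (hstar : ∃ s : Fin m → MvPolynomial (Fin n) K, s i ∉ Q ∧
      ∀ d : Derivation K (MvPolynomial (Fin n) K) (MvPolynomial (Fin n) K),
        (∑ l, s l * d (f l)) ∈ Q) :
    ∃ b c : MvPolynomial (Fin n) K, b ∈ Ri K p f i ∧ c ∈ Ri K p f i ∧
      Ideal.Quotient.mk Q b ≠ 0 ∧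
      Ideal.Quotient.mk Q b * Ideal.Quotient.mk Q (f i) = Ideal.Quotient.mk Q c := by
  classical
  obtain ⟨s, hsi, hs⟩ := hstar
  haveI := hQ
  haveI : NeZero p := ⟨hp.ne'⟩
  haveI hfact : Fact p.Prime := CharP.char_is_prime_of_pos K p
  have hpprime : p.Prime := hfact.out
  haveI : CharP (MvPolynomial (Fin n) K) p :=
    charP_of_injective_ringHom (MvPolynomial.C_injective (Fin n) K) p
  -- Frobenius: p-th powers land in B
  have hfrob : ∀ z : MvPolynomial (Fin n) K, z ^ p ∈ pPowers K n p := by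
    intro z
    induction z using MvPolynomial.induction_on with
    | C a =>
      rw [← map_pow]
      exact Subalgebra.algebraMap_mem _ (a ^ p)
    | add g h hg hh =>
      rw [add_pow_char (R := MvPolynomial (Fin n) K)]
      exact add_mem hg hh
    | mul_X g j hg =>
      rw [mul_pow]
      exact mul_mem hg (Algebra.subset_adjoin ⟨j, rfl⟩)
  have hBRi : ∀ z : MvPolynomial (Fin n) K, z ∈ pPowers K n p → z ∈ Ri K p f i := fun z hz =>
    Subring.subset_closure (Or.inl hz)
  have hfRi : ∀ l : Fin m, l ≠ i → f l ∈ Ri K p f i := fun l hl =>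
    Subring.subset_closure (Or.inr ⟨l, hl, rfl⟩)
  -- the quotient ring and its fraction field
  set mk : MvPolynomial (Fin n) K →+* (MvPolynomial (Fin n) K ⧸ Q) := Ideal.Quotient.mk Q
    with hmk
  have hmksurj : Function.Surjective mk := Ideal.Quotient.mk_surjective
  haveI : Nontrivial (MvPolynomial (Fin n) K ⧸ Q) := Ideal.Quotient.nontrivial_iff.mpr hQ.ne_top
  haveI : Algebra (ZMod p) (MvPolynomial (Fin n) K) := ZMod.algebra _ p
  haveI : CharP (MvPolynomial (Fin n) K ⧸ Q) p := by
    refine charP_of_injective_ringHom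
      (f := (mk.comp (algebraMap (ZMod p) (MvPolynomial (Fin n) K)))) ?_ p
    exact (mk.comp (algebraMap (ZMod p) (MvPolynomial (Fin n) K))).injective
  set ι : (MvPolynomial (Fin n) K ⧸ Q) →+* FractionRing (MvPolynomial (Fin n) K ⧸ Q) :=
    algebraMap _ _ with hι
  have hιinj : Function.Injective ι :=
    IsFractionRing.injective (MvPolynomial (Fin n) K ⧸ Q) (FractionRing (MvPolynomial (Fin n) K ⧸ Q))
  haveI : CharP (FractionRing (MvPolynomial (Fin n) K ⧸ Q)) p := charP_of_injective_ringHom hιinj p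
  set φ : MvPolynomial (Fin n) K →+* FractionRing (MvPolynomial (Fin n) K ⧸ Q) := ι.comp mk
    with hφ
  -- the subring T and the subfield E of fractions of T
  set T : Subring (FractionRing (MvPolynomial (Fin n) K ⧸ Q)) := (Ri K p f i).map φ with hT
  set E : Subfield (FractionRing (MvPolynomial (Fin n) K ⧸ Q)) := fracSubfield T with hE
  have hTE : ∀ x ∈ T, x ∈ E := fun x hx => mem_fracSubfield_of_mem T hx
  -- every p-th power lies in E
  have hEp : ∀ x : FractionRing (MvPolynomial (Fin n) K ⧸ Q), x ^ p ∈ E := by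
    intro x
    obtain ⟨⟨num, den⟩, hx⟩ := IsLocalization.surj (nonZeroDivisors (MvPolynomial (Fin n) K ⧸ Q)) x
    obtain ⟨n0, rfl⟩ := hmksurj num
    obtain ⟨d0, hd0⟩ := hmksurj (den : MvPolynomial (Fin n) K ⧸ Q)
    have hden0 : (den : MvPolynomial (Fin n) K ⧸ Q) ≠ 0 := nonZeroDivisors.ne_zero den.2
    refine ⟨φ (n0 ^ p), ⟨n0 ^ p, hBRi _ (hfrob n0), rfl⟩,
      φ (d0 ^ p), ⟨d0 ^ p, hBRi _ (hfrob d0), rfl⟩, ?_, ?_⟩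
    · have h1 : mk (d0 ^ p) ≠ 0 := by
        rw [map_pow, hd0]
        exact pow_ne_zero p hden0
      rw [hφ, RingHom.comp_apply]
      rw [Ne, map_eq_zero_iff ι hιinj]
      exact h1
    · have h2 : φ (d0 ^ p) = (ι (den : MvPolynomial (Fin n) K ⧸ Q)) ^ p := by
        rw [hφ, RingHom.comp_apply, map_pow, hd0, map_pow]
      have h3 : φ (n0 ^ p) = (ι (mk n0)) ^ p := by
        rw [hφ, RingHom.comp_apply, map_pow, map_pow]
      rw [h2, h3, ← mul_pow, hx]
  -- conclude, given that the image of f i lies in E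
  have hufinal : φ (f i) ∈ E → ∃ b c : MvPolynomial (Fin n) K, b ∈ Ri K p f i ∧ c ∈ Ri K p f i ∧
      mk b ≠ 0 ∧ mk b * mk (f i) = mk c := by
    rintro ⟨a, ⟨a0, ha0, rfl⟩, b, ⟨b0, hb0, rfl⟩, hbne, heq⟩
    refine ⟨b0, a0, hb0, ha0, ?_, ?_⟩
    · intro h
      apply hbne
      rw [hφ, RingHom.comp_apply, h, map_zero]
    · apply hιinj
      rw [map_mul]
      calc ι (mk b0) * ι (mk (f i)) = φ (f i) * φ b0 := by
            rw [hφ]; simp only [RingHom.comp_apply]; ring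
        _ = ι (mk a0) := by rw [heq, hφ, RingHom.comp_apply]
  refine hufinal ?_
  by_contra hu
  obtain ⟨D, Dadd, Dmul, DE, Dne⟩ := exists_bderivation hpprime E hEp hu
  -- clear denominators of the D-images of the variables
  obtain ⟨t, ht⟩ := IsLocalization.exist_integer_multiples_of_finite
    (nonZeroDivisors (MvPolynomial (Fin n) K ⧸ Q)) (fun j : Fin n => D (φ (X j)))
  choose c hc using ht
  choose a ha using fun j => hmksurj (c j)
  have htb0 : ι (t : MvPolynomial (Fin n) K ⧸ Q) ≠ 0 := by
    rw [Ne, map_eq_zero_iff ι hιinj]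
    exact nonZeroDivisors.ne_zero t.2
  have hcj : ∀ j, ι (mk (a j)) = ι (t : MvPolynomial (Fin n) K ⧸ Q) * D (φ (X j)) := by
    intro j
    rw [ha j, hc j, Algebra.smul_def]
  -- the derivation d = ∑ a_j ∂_j
  set d : Derivation K (MvPolynomial (Fin n) K) (MvPolynomial (Fin n) K) :=
    ∑ j, a j • pderiv j with hd
  have hdapp : ∀ g : MvPolynomial (Fin n) K, d g = ∑ j, a j * pderiv j g := by
    intro g
    rw [hd]
    have h := congrFun (map_sum (Derivation.coeFnAddMonoidHom (R := K)
      (A := MvPolynomial (Fin n) K) (M := MvPolynomial (Fin n) K))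
      (fun j => a j • pderiv j) Finset.univ) g
    simp only [Derivation.coeFnAddMonoidHom, AddMonoidHom.coe_mk, ZeroHom.coe_mk] at h
    rw [h, Finset.sum_apply]
    simp [Derivation.smul_apply, smul_eq_mul]
  -- main computation : φ (d g) = ι t * D (φ g)
  have hmain : ∀ g : MvPolynomial (Fin n) K,
      φ (d g) = ι (t : MvPolynomial (Fin n) K ⧸ Q) * D (φ g) := by
    intro g
    induction g using MvPolynomial.induction_on with
    | C k =>
      have h1 : d (C k : MvPolynomial (Fin n) K) = 0 := by
        have h0 : (C k : MvPolynomial (Fin n) K) = algebraMap K (MvPolynomial (Fin n) K) k := rfl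
        rw [h0, Derivation.map_algebraMap]
      have h2 : D (φ (C k)) = 0 := by
        apply DE
        apply hTE
        exact ⟨C k, hBRi _ (Subalgebra.algebraMap_mem _ k), rfl⟩
      rw [h1, h2, map_zero, mul_zero]
    | add g h hg hh =>
      rw [map_add, map_add, map_add, Dadd, hg, hh, mul_add]
    | mul_X g j hg =>
      have hdX : d (X j) = a j := by
        rw [hdapp, Finset.sum_eq_single j]
        · simp
        · intro j' _ hj'
          rw [pderiv_X_of_ne (Ne.symm hj'), mul_zero]
        · simp
      have hl : d (g * X j) = g * d (X j) + X j * d g := by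
        rw [Derivation.leibniz]
        simp [smul_eq_mul]
      have hXj : φ (a j) = ι (t : MvPolynomial (Fin n) K ⧸ Q) * D (φ (X j)) := by
        rw [hφ, RingHom.comp_apply]
        exact hcj j
      rw [hl, hdX, map_add, map_mul, map_mul, map_mul, Dmul, hg, hXj]
      ring
  -- contradiction with (*)
  have hzero : φ (∑ l, s l * d (f l)) = 0 := by
    have hmem := hs d
    rw [hφ, RingHom.comp_apply]
    have h0 : mk (∑ l, s l * d (f l)) = 0 := Ideal.Quotient.eq_zero_iff_mem.mpr hmem
    rw [h0, map_zero]
  rw [map_sum] at hzero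
  have hterm : ∀ l : Fin m, l ∈ Finset.univ → l ≠ i → φ (s l * d (f l)) = 0 := by
    intro l _ hl
    rw [map_mul, hmain]
    have h0 : D (φ (f l)) = 0 := DE _ (hTE _ ⟨f l, hfRi l hl, rfl⟩)
    rw [h0, mul_zero, mul_zero]
  rw [Finset.sum_eq_single i hterm (by simp)] at hzero
  rw [map_mul, hmain] at hzero
  have hsi0 : φ (s i) ≠ 0 := by
    rw [hφ, RingHom.comp_apply, Ne, map_eq_zero_iff ι hιinj]
    intro h
    exact hsi (Ideal.Quotient.eq_zero_iff_mem.mp h)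
  rcases mul_eq_zero.mp hzero with h | h
  · exact hsi0 h
  rcases mul_eq_zero.mp h with h' | h'
  · exact htb0 h'
  · exact Dne h'
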